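/- Let 𝔠 be a filtered Floer-Novikov complex over a Noetherian ring R. Then for every nonzero class a ∈ H_*(𝔠), the spectral number ρ(a) lies in the image of the action functional: ρ(a) ∈ 𝒜(P) (the spectrality property). -/

import Mathlib

noncomputable section

open Filter

variable {R : Type*} [CommRing R] {Γ : Type*} [CommGroup Γ] {P : Type*} [MulAction Γ P]

/-- The chain condition for the downward-completed Floer complex: for every `C`
only finitely many points with nonzero coefficient have action greater than `C`. -/
def IsFloerChain (act : P → ℝ) (c : P → R) : Prop :=
  ∀ C : ℝ, {p : P | c p ≠ 0 ∧ C < act p}.Finite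

/-- The boundary operator determined by the incidence numbers `bnd`:
`(∂c)(q) = Σ_p c(p) · n(p,q)` (a finite sum on Floer chains). -/
def floerBdry (bnd : P → P → R) (c : P → R) : P → R :=
  fun q => ∑ᶠ p : P, c p * bnd p q

/-- The filtration level `ℓ(c) = max {𝒜(p) : c_p ≠ 0}` (with `ℓ(0) = -∞`). -/
def floerLevel (act : P → ℝ) (c : P → R) : EReal :=
  ⨆ p ∈ {p : P | c p ≠ 0}, (act p : EReal)

/-- A filtered Floer–Novikov complex over `R`: a principal `Γ`-bundle `P → S`
with `S` finite (encoded as a free `Γ`-action on `P` with finitely many orbits),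
an action functional and period homomorphism satisfying
`𝒜(g·p) = 𝒜(p) − ω(g)`, and incidence numbers `n(p,q)` which strictly decrease
the action, are `Γ`-invariant, and define a boundary operator on the completed
complex squaring to zero. -/
structure FloerComplex (R : Type*) [CommRing R] (Γ : Type*) [CommGroup Γ]
    (P : Type*) [MulAction Γ P] where
  /-- the `Γ`-action on the total space `P` is free -/
  free : ∀ (g : Γ) (p : P), g • p = p → g = 1
  /-- the base `S = P/Γ` is a finite set -/
  finiteOrbits : Finite (MulAction.orbitRel.Quotient Γ P)
  /-- the action functional `𝒜 : P → ℝ` -/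
  act : P → ℝ
  /-- the period homomorphism `ω : Γ → ℝ` -/
  per : Γ → ℝ
  per_hom : ∀ g h : Γ, per (g * h) = per g + per h
  act_smul : ∀ (g : Γ) (p : P), act (g • p) = act p - per g
  /-- the incidence numbers `n : P × P → R` -/
  bnd : P → P → R
  bnd_vanish : ∀ p q : P, bnd p q ≠ 0 → act q < act p
  bnd_equivariant : ∀ (g : Γ) (p q : P), bnd (g • p) (g • q) = bnd p q
  bnd_chain : ∀ p : P, ∀ C : ℝ, {q : P | bnd p q ≠ 0 ∧ C < act q}.Finite
  bdry_isChain : ∀ c : P → R, IsFloerChain act c → IsFloerChain act (floerBdry bnd c)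
  bdry_bdry : ∀ c : P → R, IsFloerChain act c → floerBdry bnd (floerBdry bnd c) = 0

/-- The set of filtration levels of the representatives of the homology class
of the cycle `c₀`; its infimum is the spectral number `ρ([c₀])`. -/
def repLevels (𝔠 : FloerComplex R Γ P) (c₀ : P → R) : Set EReal :=
  {x : EReal | ∃ c : P → R, IsFloerChain 𝔠.act c ∧ floerBdry 𝔠.bnd c = 0 ∧
    (∃ h : P → R, IsFloerChain 𝔠.act h ∧ floerBdry 𝔠.bnd h = c - c₀) ∧
    x = floerLevel 𝔠.act c}

namespace FloerProof
set_option linter.unusedSectionVars false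

variable (𝔠 : FloerComplex R Γ P)

/-! ### Basic facts about `per` and `act` -/

lemma per_one : 𝔠.per 1 = 0 := by
  have := 𝔠.per_hom 1 1
  simp at this; linarith

lemma per_inv (g : Γ) : 𝔠.per g⁻¹ = - 𝔠.per g := by
  have := 𝔠.per_hom g g⁻¹
  rw [mul_inv_cancel, per_one] at this
  linarith

lemma act_inv_smul (g : Γ) (p : P) : 𝔠.act (g⁻¹ • p) = 𝔠.act p + 𝔠.per g := by
  rw [𝔠.act_smul, per_inv]; ring

/-! ### Chain operations -/

/-- Shift of a chain by a group element. -/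
def shiftc (g : Γ) (c : P → R) : P → R := fun p => c (g⁻¹ • p)

lemma shiftc_apply (g : Γ) (c : P → R) (p : P) : shiftc g c p = c (g⁻¹ • p) := rfl

/-- The set of boundaries. -/
def Bd : Set (P → R) :=
  {c | ∃ h : P → R, IsFloerChain 𝔠.act h ∧ floerBdry 𝔠.bnd h = c}

/-- The level of a chain, as a real number (junk value for `c = 0`). -/
def lev (c : P → R) : ℝ := sSup (𝔠.act '' Function.support c)

/-- The part of a chain at action level exactly `t`. -/
def slice (t : ℝ) (c : P → R) : P → R := fun p => if 𝔠.act p = t then c p else 0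

def topSlice (c : P → R) : P → R := slice 𝔠 (lev 𝔠 c) c

lemma isGreatest_lev {c : P → R} (hc : IsFloerChain 𝔠.act c) (hne : c ≠ 0) :
    IsGreatest (𝔠.act '' Function.support c) (lev 𝔠 c) := by
  obtain ⟨p₀, hp₀⟩ : ∃ p, c p ≠ 0 := by
    by_contra h; push_neg at h; exact hne (funext fun p => h p)
  have hF : {p : P | c p ≠ 0 ∧ 𝔠.act p₀ - 1 < 𝔠.act p}.Finite := hc _
  have hp₀F : p₀ ∈ hF.toFinset := by
    rw [Set.Finite.mem_toFinset]; exact ⟨hp₀, by linarith⟩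
  have hne' : (hF.toFinset.image 𝔠.act).Nonempty := ⟨𝔠.act p₀, Finset.mem_image_of_mem _ hp₀F⟩
  let t := (hF.toFinset.image 𝔠.act).max' hne'
  have hub : ∀ p, c p ≠ 0 → 𝔠.act p ≤ t := by
    intro p hp
    by_cases h : 𝔠.act p₀ - 1 < 𝔠.act p
    · exact Finset.le_max' _ _ (Finset.mem_image_of_mem _ (by rw [Set.Finite.mem_toFinset]; exact ⟨hp, h⟩))
    · push_neg at h
      have : 𝔠.act p₀ ≤ t := Finset.le_max' _ _ (Finset.mem_image_of_mem _ hp₀F)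
      linarith
  have hmem : t ∈ 𝔠.act '' Function.support c := by
    have := Finset.max'_mem (hF.toFinset.image 𝔠.act) hne'
    simp only [Finset.mem_image, Set.Finite.mem_toFinset] at this
    obtain ⟨p, hp, hpt⟩ := this
    exact ⟨p, hp.1, hpt⟩
  have hG : IsGreatest (𝔠.act '' Function.support c) t :=
    ⟨hmem, by rintro x ⟨p, hp, rfl⟩; exact hub p hp⟩
  rwa [lev, hG.csSup_eq]

lemma lev_mem {c : P → R} (hc : IsFloerChain 𝔠.act c) (hne : c ≠ 0) :
    ∃ p, c p ≠ 0 ∧ 𝔠.act p = lev 𝔠 c := by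
  obtain ⟨⟨p, hp, hpt⟩, -⟩ := isGreatest_lev 𝔠 hc hne
  exact ⟨p, hp, hpt⟩

lemma le_lev {c : P → R} (hc : IsFloerChain 𝔠.act c) (hne : c ≠ 0) {p : P}
    (hp : c p ≠ 0) : 𝔠.act p ≤ lev 𝔠 c :=
  (isGreatest_lev 𝔠 hc hne).2 ⟨p, hp, rfl⟩

lemma apply_eq_zero_of_lev_lt {c : P → R} (hc : IsFloerChain 𝔠.act c) (hne : c ≠ 0) {p : P}
    (hp : lev 𝔠 c < 𝔠.act p) : c p = 0 := by
  by_contra h; exact absurd (le_lev 𝔠 hc hne h) (not_le.2 hp)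

/-- Characterisation of `lev`. -/
lemma lev_eq_of {c : P → R} (hc : IsFloerChain 𝔠.act c) (hne : c ≠ 0) {t : ℝ}
    (hmem : ∃ p, c p ≠ 0 ∧ 𝔠.act p = t) (hub : ∀ p, c p ≠ 0 → 𝔠.act p ≤ t) :
    lev 𝔠 c = t := by
  obtain ⟨p, hp, hpt⟩ := hmem
  obtain ⟨q, hq, hqt⟩ := lev_mem 𝔠 hc hne
  have h1 := le_lev 𝔠 hc hne hp
  have h2 := hub q hq
  linarith [hpt ▸ h1, hqt ▸ h2]

lemma floerLevel_eq_lev {c : P → R} (hc : IsFloerChain 𝔠.act c) (hne : c ≠ 0) :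
    floerLevel 𝔠.act c = ((lev 𝔠 c : ℝ) : EReal) := by
  apply le_antisymm
  · refine iSup₂_le fun p hp => ?_
    exact_mod_cast EReal.coe_le_coe_iff.2 (le_lev 𝔠 hc hne hp)
  · obtain ⟨p, hp, hpt⟩ := lev_mem 𝔠 hc hne
    rw [← hpt]
    exact le_iSup₂ (f := fun (p : P) (_ : p ∈ {p : P | c p ≠ 0}) => ((𝔠.act p : ℝ) : EReal)) p hp


/-! ### Closure properties of `IsFloerChain` -/

lemma IsFloerChain.zero' : IsFloerChain 𝔠.act (0 : P → R) := by
  intro C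
  convert Set.finite_empty using 1
  ext p; simp

lemma floer_neg {c : P → R} (hc : IsFloerChain 𝔠.act c) :
    IsFloerChain 𝔠.act (-c) := by
  intro C
  refine (hc C).subset fun p hp => ?_
  simp only [Set.mem_setOf_eq, Pi.neg_apply, neg_ne_zero] at hp ⊢
  exact hp

lemma floer_add {c c' : P → R} (hc : IsFloerChain 𝔠.act c) (hc' : IsFloerChain 𝔠.act c') :
    IsFloerChain 𝔠.act (c + c') := by
  intro C
  refine ((hc C).union (hc' C)).subset fun p hp => ?_
  simp only [Set.mem_setOf_eq, Pi.add_apply, Set.mem_union] at hp ⊢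
  by_cases h : c p = 0
  · exact Or.inr ⟨by simpa [h] using hp.1, hp.2⟩
  · exact Or.inl ⟨h, hp.2⟩

lemma floer_sub {c c' : P → R} (hc : IsFloerChain 𝔠.act c) (hc' : IsFloerChain 𝔠.act c') :
    IsFloerChain 𝔠.act (c - c') := by
  simpa [sub_eq_add_neg] using floer_add 𝔠 hc (floer_neg 𝔠 hc')

lemma floer_smul (r : R) {c : P → R} (hc : IsFloerChain 𝔠.act c) :
    IsFloerChain 𝔠.act (r • c) := by
  intro C
  refine (hc C).subset fun p hp => ?_
  simp only [Set.mem_setOf_eq, Pi.smul_apply, smul_eq_mul] at hp ⊢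
  exact ⟨fun h => hp.1 (by simp [h]), hp.2⟩

lemma floer_shiftc (g : Γ) {c : P → R} (hc : IsFloerChain 𝔠.act c) :
    IsFloerChain 𝔠.act (shiftc g c) := by
  intro C
  refine (Set.Finite.image (g • ·) (hc (C + 𝔠.per g))).subset fun p hp => ?_
  obtain ⟨h1, h2⟩ := hp
  refine ⟨g⁻¹ • p, ⟨h1, ?_⟩, by simp⟩
  rw [act_inv_smul]; linarith

lemma floer_finsetSum {ι : Type*} (s : Finset ι) (f : ι → (P → R))
    (hf : ∀ i ∈ s, IsFloerChain 𝔠.act (f i)) :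
    IsFloerChain 𝔠.act (∑ i ∈ s, f i) := by
  classical
  induction s using Finset.induction_on with
  | empty => simpa using IsFloerChain.zero' 𝔠
  | insert _ _ hnotmem ih =>
    rename_i a s'
    rw [Finset.sum_insert hnotmem]
    exact floer_add 𝔠 (hf a (Finset.mem_insert_self a s'))
      (ih fun i hi => hf i (Finset.mem_insert_of_mem hi))

lemma floer_slice (t : ℝ) {c : P → R} (hc : IsFloerChain 𝔠.act c) :
    IsFloerChain 𝔠.act (slice 𝔠 t c) := by
  intro C
  refine (hc C).subset fun p hp => ?_
  simp only [Set.mem_setOf_eq, slice] at hp ⊢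
  refine ⟨fun h => hp.1 (by simp [h]), hp.2⟩

lemma slice_support_finite (t : ℝ) {c : P → R} (hc : IsFloerChain 𝔠.act c) :
    (Function.support (slice 𝔠 t c)).Finite := by
  refine (hc (t - 1)).subset fun p hp => ?_
  simp only [Function.mem_support, slice] at hp
  by_cases h : 𝔠.act p = t
  · simp only [h, if_true] at hp
    exact ⟨hp, by rw [h]; linarith⟩
  · simp [h] at hp

lemma slice_apply_of_act (t : ℝ) (c : P → R) {p : P} (hp : 𝔠.act p = t) :
    slice 𝔠 t c p = c p := by simp [slice, hp]

lemma slice_apply_of_ne (t : ℝ) (c : P → R) {p : P} (hp : 𝔠.act p ≠ t) :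
    slice 𝔠 t c p = 0 := by simp [slice, hp]

lemma slice_add (t : ℝ) (c c' : P → R) :
    slice 𝔠 t (c + c') = slice 𝔠 t c + slice 𝔠 t c' := by
  funext p; by_cases h : 𝔠.act p = t <;> simp [slice, h]

lemma slice_neg (t : ℝ) (c : P → R) : slice 𝔠 t (-c) = - slice 𝔠 t c := by
  funext p; by_cases h : 𝔠.act p = t <;> simp [slice, h]

lemma slice_sub (t : ℝ) (c c' : P → R) :
    slice 𝔠 t (c - c') = slice 𝔠 t c - slice 𝔠 t c' := by
  funext p; by_cases h : 𝔠.act p = t <;> simp [slice, h]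

lemma slice_finsetSum (t : ℝ) {ι : Type*} (s : Finset ι) (f : ι → (P → R)) :
    slice 𝔠 t (∑ i ∈ s, f i) = ∑ i ∈ s, slice 𝔠 t (f i) := by
  classical
  induction s using Finset.induction_on with
  | empty => funext p; by_cases h : 𝔠.act p = t <;> simp [slice, h]
  | insert _ _ hnotmem ih =>
    rename_i a s'
    rw [Finset.sum_insert hnotmem, Finset.sum_insert hnotmem, slice_add, ih]

lemma slice_slice (t : ℝ) (c : P → R) : slice 𝔠 t (slice 𝔠 t c) = slice 𝔠 t c := by
  funext p; by_cases h : 𝔠.act p = t <;> simp [slice, h]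

lemma topSlice_ne_zero {c : P → R} (hc : IsFloerChain 𝔠.act c) (hne : c ≠ 0) :
    topSlice 𝔠 c ≠ 0 := by
  obtain ⟨p, hp, hpt⟩ := lev_mem 𝔠 hc hne
  intro h
  have := congrFun h p
  rw [topSlice, slice_apply_of_act 𝔠 _ _ hpt] at this
  exact hp this

lemma slice_eq_zero_of_gt {c : P → R} (hc : IsFloerChain 𝔠.act c) (hne : c ≠ 0) {t : ℝ}
    (ht : lev 𝔠 c < t) : slice 𝔠 t c = 0 := by
  funext p
  by_cases h : 𝔠.act p = t
  · rw [slice_apply_of_act 𝔠 _ _ h]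
    exact apply_eq_zero_of_lev_lt 𝔠 hc hne (h ▸ ht)
  · exact slice_apply_of_ne 𝔠 _ _ h

/-! ### Lemmas about `floerBdry` -/

lemma bdry_summand_finite {c : P → R} (hc : IsFloerChain 𝔠.act c) (q : P) :
    (Function.support fun p => c p * 𝔠.bnd p q).Finite := by
  refine (hc (𝔠.act q)).subset fun p hp => ?_
  simp only [Function.mem_support] at hp
  have h1 : c p ≠ 0 := fun h => hp (by simp [h])
  have h2 : 𝔠.bnd p q ≠ 0 := fun h => hp (by simp [h])
  exact ⟨h1, 𝔠.bnd_vanish p q h2⟩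

lemma floerBdry_zero : floerBdry 𝔠.bnd (0 : P → R) = 0 := by
  funext q; simp [floerBdry]

lemma floerBdry_add {c c' : P → R} (hc : IsFloerChain 𝔠.act c) (hc' : IsFloerChain 𝔠.act c') :
    floerBdry 𝔠.bnd (c + c') = floerBdry 𝔠.bnd c + floerBdry 𝔠.bnd c' := by
  funext q
  have : ∀ p, (c p + c' p) * 𝔠.bnd p q = c p * 𝔠.bnd p q + c' p * 𝔠.bnd p q := by
    intro p; simp [add_mul]
  simp only [floerBdry, Pi.add_apply]
  rw [finsum_congr this, finsum_add_distrib (bdry_summand_finite 𝔠 hc q) (bdry_summand_finite 𝔠 hc' q)]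

lemma floerBdry_neg (c : P → R) :
    floerBdry 𝔠.bnd (-c) = - floerBdry 𝔠.bnd c := by
  funext q
  simp only [floerBdry, Pi.neg_apply]
  rw [← finsum_neg_distrib]
  exact finsum_congr fun p => by simp

lemma floerBdry_sub {c c' : P → R} (hc : IsFloerChain 𝔠.act c) (hc' : IsFloerChain 𝔠.act c') :
    floerBdry 𝔠.bnd (c - c') = floerBdry 𝔠.bnd c - floerBdry 𝔠.bnd c' := by
  rw [sub_eq_add_neg, sub_eq_add_neg, floerBdry_add 𝔠 hc (floer_neg 𝔠 hc'), floerBdry_neg]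

lemma floerBdry_smul (r : R) {c : P → R} (hc : IsFloerChain 𝔠.act c) :
    floerBdry 𝔠.bnd (r • c) = r • floerBdry 𝔠.bnd c := by
  funext q
  simp only [floerBdry, Pi.smul_apply, smul_eq_mul]
  rw [finsum_congr (fun p => mul_assoc r (c p) (𝔠.bnd p q)),
    ← mul_finsum' _ r (bdry_summand_finite 𝔠 hc q)]

lemma floerBdry_finsetSum {ι : Type*} (s : Finset ι) (f : ι → (P → R))
    (hf : ∀ i ∈ s, IsFloerChain 𝔠.act (f i)) :
    floerBdry 𝔠.bnd (∑ i ∈ s, f i) = ∑ i ∈ s, floerBdry 𝔠.bnd (f i) := by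
  classical
  induction s using Finset.induction_on with
  | empty => simpa using floerBdry_zero 𝔠
  | insert _ _ hnotmem ih =>
    rename_i a s'
    rw [Finset.sum_insert hnotmem, Finset.sum_insert hnotmem,
      floerBdry_add 𝔠 (hf a (Finset.mem_insert_self a s'))
        (floer_finsetSum 𝔠 s' f fun i hi => hf i (Finset.mem_insert_of_mem hi)),
      ih fun i hi => hf i (Finset.mem_insert_of_mem hi)]

lemma floerBdry_shiftc (g : Γ) (c : P → R) :
    floerBdry 𝔠.bnd (shiftc g c) = shiftc g (floerBdry 𝔠.bnd c) := by
  funext q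
  simp only [floerBdry, shiftc]
  rw [← finsum_comp_equiv (MulAction.toPerm g)]
  refine finsum_congr fun p => ?_
  have h1 : (MulAction.toPerm g : P ≃ P) p = g • p := rfl
  rw [h1]
  have h2 : g⁻¹ • (g • p) = p := by simp
  rw [h2]
  congr 1
  have := 𝔠.bnd_equivariant g p (g⁻¹ • q)
  rw [smul_inv_smul] at this
  exact this


/-! ### The operator `actA`: action of the group algebra on chains -/

def actA (a : MonoidAlgebra R Γ) (c : P → R) : P → R :=
  fun p => a.coeff.sum fun g r => r * c (g⁻¹ • p)

lemma actA_apply (a : MonoidAlgebra R Γ) (c : P → R) (p : P) :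
    actA a c p = ∑ g ∈ a.coeff.support, a.coeff g * c (g⁻¹ • p) := rfl

lemma actA_eq_sum (a : MonoidAlgebra R Γ) (c : P → R) :
    actA a c = ∑ g ∈ a.coeff.support, a.coeff g • shiftc g c := by
  funext p
  rw [actA_apply, Finset.sum_apply]
  exact Finset.sum_congr rfl fun g _ => rfl

lemma actA_zero (c : P → R) : actA (0 : MonoidAlgebra R Γ) c = 0 := by
  funext p; simp [actA, Finsupp.sum_zero_index]

lemma actA_single (g : Γ) (r : R) (c : P → R) :
    actA (MonoidAlgebra.single g r) c = r • shiftc g c := by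
  funext p
  rw [actA, MonoidAlgebra.coeff_single]
  rw [Finsupp.sum_single_index (by simp)]
  rfl

lemma actA_add_left (a b : MonoidAlgebra R Γ) (c : P → R) :
    actA (a + b) c = actA a c + actA b c := by
  classical
  funext p
  rw [actA, MonoidAlgebra.coeff_add, Finsupp.sum_add_index (by simp) (by intro g r1 r2; simp [add_mul])]
  rfl

lemma floer_actA (a : MonoidAlgebra R Γ) {c : P → R} (hc : IsFloerChain 𝔠.act c) :
    IsFloerChain 𝔠.act (actA a c) := by
  rw [actA_eq_sum]
  exact floer_finsetSum 𝔠 _ _ fun g _ => floer_smul 𝔠 _ (floer_shiftc 𝔠 g hc)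

lemma floerBdry_actA (a : MonoidAlgebra R Γ) {c : P → R} (hc : IsFloerChain 𝔠.act c) :
    floerBdry 𝔠.bnd (actA a c) = actA a (floerBdry 𝔠.bnd c) := by
  rw [actA_eq_sum, actA_eq_sum,
    floerBdry_finsetSum 𝔠 _ _ fun g _ => floer_smul 𝔠 _ (floer_shiftc 𝔠 g hc)]
  refine Finset.sum_congr rfl fun g _ => ?_
  rw [floerBdry_smul 𝔠 _ (floer_shiftc 𝔠 g hc), floerBdry_shiftc]

lemma actA_support_subset (a : MonoidAlgebra R Γ) (c : P → R) :
    Function.support (actA a c) ⊆ ⋃ g ∈ a.coeff.support, (g • ·) '' Function.support c := by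
  intro p hp
  rw [Function.mem_support, actA_apply] at hp
  obtain ⟨g, hg, hne⟩ : ∃ g ∈ a.coeff.support, a.coeff g * c (g⁻¹ • p) ≠ 0 := by
    by_contra h; push_neg at h; exact hp (Finset.sum_eq_zero h)
  have hc : c (g⁻¹ • p) ≠ 0 := fun h => hne (by simp [h])
  exact Set.mem_biUnion hg ⟨g⁻¹ • p, hc, by simp⟩

lemma actA_support_finite (a : MonoidAlgebra R Γ) {c : P → R}
    (hc : (Function.support c).Finite) :
    (Function.support (actA a c)).Finite := by
  refine Set.Finite.subset ?_ (actA_support_subset a c)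
  exact (a.coeff.support.finite_toSet.biUnion fun g _ => hc.image _)

/-! ### Membership lemmas for the set of boundaries -/

lemma Bd_floer {c : P → R} (hc : c ∈ Bd 𝔠) : IsFloerChain 𝔠.act c := by
  obtain ⟨h, hh, rfl⟩ := hc
  exact 𝔠.bdry_isChain h hh

lemma Bd_zero : (0 : P → R) ∈ Bd 𝔠 :=
  ⟨0, IsFloerChain.zero' 𝔠, floerBdry_zero 𝔠⟩

lemma Bd_add {c c' : P → R} (hc : c ∈ Bd 𝔠) (hc' : c' ∈ Bd 𝔠) : c + c' ∈ Bd 𝔠 := by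
  obtain ⟨h, hh, rfl⟩ := hc
  obtain ⟨h', hh', rfl⟩ := hc'
  exact ⟨h + h', floer_add 𝔠 hh hh', floerBdry_add 𝔠 hh hh'⟩

lemma Bd_neg {c : P → R} (hc : c ∈ Bd 𝔠) : -c ∈ Bd 𝔠 := by
  obtain ⟨h, hh, rfl⟩ := hc
  exact ⟨-h, floer_neg 𝔠 hh, floerBdry_neg 𝔠 h⟩

lemma Bd_sub {c c' : P → R} (hc : c ∈ Bd 𝔠) (hc' : c' ∈ Bd 𝔠) : c - c' ∈ Bd 𝔠 := by
  rw [sub_eq_add_neg]; exact Bd_add 𝔠 hc (Bd_neg 𝔠 hc')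

lemma Bd_actA (a : MonoidAlgebra R Γ) {c : P → R} (hc : c ∈ Bd 𝔠) : actA a c ∈ Bd 𝔠 := by
  obtain ⟨h, hh, rfl⟩ := hc
  exact ⟨actA a h, floer_actA 𝔠 a hh, floerBdry_actA 𝔠 a hh⟩

lemma Bd_finsetSum {ι : Type*} (s : Finset ι) (f : ι → (P → R))
    (hf : ∀ i ∈ s, f i ∈ Bd 𝔠) : (∑ i ∈ s, f i) ∈ Bd 𝔠 := by
  classical
  induction s using Finset.induction_on with
  | empty => simpa using Bd_zero 𝔠
  | insert _ _ hnotmem ih =>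
    rename_i a s'
    rw [Finset.sum_insert hnotmem]
    exact Bd_add 𝔠 (hf a (Finset.mem_insert_self a s'))
      (ih fun i hi => hf i (Finset.mem_insert_of_mem hi))

/-! ### The transport map `theta` into a finitely generated module over the group algebra -/

variable (R Γ P) in
abbrev QA := (MulAction.orbitRel.Quotient Γ P) →₀ MonoidAlgebra R Γ

lemma smul_out_injective (h : ∀ (g : Γ) (p : P), g • p = p → g = 1) (x : P) :
    Function.Injective fun γ : Γ => γ • x := by
  intro γ₁ γ₂ hγ
  simp only at hγ
  have : (γ₂⁻¹ * γ₁) • x = x := by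
    rw [mul_smul, hγ, inv_smul_smul]
  have := h _ _ this
  rwa [inv_mul_eq_one, eq_comm] at this

lemma theta_inner_finite (h : ∀ (g : Γ) (p : P), g • p = p → g = 1) {c : P → R}
    (hc : (Function.support c).Finite) (x : P) :
    (Function.support fun γ : Γ => c (γ • x)).Finite := by
  have : (Function.support fun γ : Γ => c (γ • x)) = (fun γ : Γ => γ • x) ⁻¹' Function.support c := rfl
  rw [this]
  exact Set.Finite.preimage (Set.injOn_of_injective (smul_out_injective h x)) hc

lemma theta_outer_finite (h : ∀ (g : Γ) (p : P), g • p = p → g = 1) {c : P → R}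
    (hc : (Function.support c).Finite) :
    (Function.support fun q : MulAction.orbitRel.Quotient Γ P =>
      MonoidAlgebra.ofCoeff (Finsupp.ofSupportFinite (fun γ : Γ => c (γ • q.out))
        (theta_inner_finite h hc q.out))).Finite := by
  refine (hc.image (Quotient.mk'' : P → MulAction.orbitRel.Quotient Γ P)).subset ?_
  intro q hq
  rw [Function.mem_support] at hq
  obtain ⟨γ, hγ⟩ : ∃ γ : Γ, c (γ • q.out) ≠ 0 := by
    by_contra hcon; push_neg at hcon
    exact hq (by ext γ; simp [Finsupp.ofSupportFinite_coe, hcon γ])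
  refine ⟨γ • q.out, hγ, ?_⟩
  have h1 : (Quotient.mk'' (γ • q.out) : MulAction.orbitRel.Quotient Γ P) = Quotient.mk'' q.out :=
    Quotient.sound' (by rw [MulAction.orbitRel_apply]; exact ⟨γ, rfl⟩)
  rw [h1, Quotient.out_eq']

open scoped Classical

/-- Transport of a finitely supported chain into `QA R Γ P`. -/
def theta (h : ∀ (g : Γ) (p : P), g • p = p → g = 1) (c : P → R) : QA R Γ P :=
  if hc : (Function.support c).Finite then
    Finsupp.ofSupportFinite _ (theta_outer_finite h hc)
  else 0

lemma theta_apply (h : ∀ (g : Γ) (p : P), g • p = p → g = 1) {c : P → R}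
    (hc : (Function.support c).Finite) (q : MulAction.orbitRel.Quotient Γ P) (γ : Γ) :
    (theta h c q).coeff γ = c (γ • q.out) := by
  rw [theta, dif_pos hc]
  rfl

lemma theta_inj (h : ∀ (g : Γ) (p : P), g • p = p → g = 1) {c c' : P → R}
    (hc : (Function.support c).Finite) (hc' : (Function.support c').Finite)
    (heq : theta h c = theta h c') : c = c' := by
  funext p
  set q : MulAction.orbitRel.Quotient Γ P := Quotient.mk'' p with hq
  obtain ⟨γ, hγ⟩ : ∃ γ : Γ, γ • p = q.out := by
    have h1 : q.out ∈ MulAction.orbit Γ p := by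
      rw [← MulAction.orbitRel_apply]
      exact Quotient.mk_out' p
    exact MulAction.mem_orbit_iff.mp h1
  have h2 : p = γ⁻¹ • q.out := by rw [← hγ, inv_smul_smul]
  have : (theta h c q).coeff γ⁻¹ = (theta h c' q).coeff γ⁻¹ := by rw [heq]
  rw [theta_apply h hc, theta_apply h hc'] at this
  rw [h2]
  exact this

lemma theta_add (h : ∀ (g : Γ) (p : P), g • p = p → g = 1) {c c' : P → R}
    (hc : (Function.support c).Finite) (hc' : (Function.support c').Finite) :
    theta h (c + c') = theta h c + theta h c' := by
  have hcc' : (Function.support (c + c')).Finite :=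
    (hc.union hc').subset (Function.support_add (f := c) (g := c'))
  ext q γ
  rw [Finsupp.add_apply, MonoidAlgebra.coeff_add, Finsupp.coe_add, Pi.add_apply, theta_apply h hcc',
    theta_apply h hc, theta_apply h hc']
  rfl

lemma theta_smul_single (h : ∀ (g : Γ) (p : P), g • p = p → g = 1) (g : Γ) (r : R)
    {c : P → R} (hc : (Function.support c).Finite) :
    theta h (r • shiftc g c) = MonoidAlgebra.single g r • theta h c := by
  have hsh : (Function.support (shiftc g c)).Finite := by
    refine (hc.image (g • ·)).subset ?_
    intro p hp
    rw [Function.mem_support, shiftc_apply] at hp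
    exact ⟨g⁻¹ • p, hp, by simp⟩
  have hrs : (Function.support (r • shiftc g c)).Finite :=
    hsh.subset (Function.support_smul_subset_right _ _)
  ext q γ
  rw [theta_apply h hrs]
  rw [Finsupp.smul_apply]
  rw [show (MonoidAlgebra.single g r • theta h c q : MonoidAlgebra R Γ).coeff γ
      = r * (theta h c q).coeff (g⁻¹ * γ) from MonoidAlgebra.coeff_single_mul_apply _ r g γ]
  rw [theta_apply h hc]
  simp only [Pi.smul_apply, shiftc_apply, smul_eq_mul]
  rw [mul_smul]

lemma theta_actA (h : ∀ (g : Γ) (p : P), g • p = p → g = 1) (a : MonoidAlgebra R Γ)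
    {c : P → R} (hc : (Function.support c).Finite) :
    theta h (actA a c) = a • theta h c := by
  induction a using MonoidAlgebra.induction_linear with
  | zero =>
    rw [actA_zero, zero_smul]
    ext q γ
    rw [theta_apply h (by simp : (Function.support (0 : P → R)).Finite)]
    simp
  | add a b ha hb =>
    rw [actA_add_left, theta_add h (actA_support_finite a hc) (actA_support_finite b hc),
      ha, hb, add_smul]
  | single g r =>
    rw [actA_single, theta_smul_single h g r hc]


/-! ### Noetherianity of `QA R Γ P` over the group algebra -/

lemma isNoetherian_QA [Group.FG Γ] [IsNoetherianRing R] (hfin : Finite (MulAction.orbitRel.Quotient Γ P)) :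
    IsNoetherian (MonoidAlgebra R Γ) (QA R Γ P) := by
  haveI : Monoid.FG Γ := Group.fg_iff_monoid_fg.mp inferInstance
  haveI : IsNoetherianRing (MonoidAlgebra R Γ) :=
    Algebra.FiniteType.isNoetherianRing R (MonoidAlgebra R Γ)
  haveI := hfin
  exact isNoetherian_of_isNoetherianRing_of_finite (MonoidAlgebra R Γ) (QA R Γ P)

/-- The generators of the "graded module of boundaries". -/
def grGens (h : ∀ (g : Γ) (p : P), g • p = p → g = 1) : Set (QA R Γ P) :=
  {v | ∃ y, y ∈ Bd 𝔠 ∧ y ≠ 0 ∧ v = theta h (topSlice 𝔠 y)}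

/-- Selection of a finite standard basis from the graded module of boundaries. -/
lemma exists_sbasis [Group.FG Γ] [IsNoetherianRing R]
    (h : ∀ (g : Γ) (p : P), g • p = p → g = 1) :
    ∃ s : Finset (P → R), (∀ y ∈ s, y ∈ Bd 𝔠 ∧ y ≠ 0) ∧
      ∀ y, y ∈ Bd 𝔠 → y ≠ 0 →
        theta h (topSlice 𝔠 y) ∈ Submodule.span (MonoidAlgebra R Γ)
          ((fun z => theta h (topSlice 𝔠 z)) '' (s : Set (P → R))) := by
  haveI := isNoetherian_QA (R := R) (Γ := Γ) (P := P) 𝔠.finiteOrbits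
  set W : Submodule (MonoidAlgebra R Γ) (QA R Γ P) :=
    Submodule.span (MonoidAlgebra R Γ) (grGens 𝔠 h) with hW
  obtain ⟨T, hTspan⟩ : W.FG := IsNoetherian.noetherian W
  -- each element of T lies in the span of a finite subset of grGens
  have hT : ∀ v ∈ T, ∃ F : Finset (QA R Γ P), ↑F ⊆ grGens 𝔠 h ∧
      v ∈ Submodule.span (MonoidAlgebra R Γ) (F : Set (QA R Γ P)) := by
    intro v hv
    have : v ∈ W := hTspan ▸ Submodule.subset_span hv
    rw [hW] at this
    exact Submodule.mem_span_finite_of_mem_span this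
  choose F hFsub hFmem using hT
  classical
  set U : Finset (QA R Γ P) := T.attach.biUnion (fun v => F v v.2) with hU
  have hUsub : (U : Set (QA R Γ P)) ⊆ grGens 𝔠 h := by
    intro v hv
    rw [hU] at hv
    simp only [Finset.coe_biUnion, Set.mem_iUnion, Finset.mem_coe] at hv
    obtain ⟨w, hw, hv⟩ := hv
    exact hFsub w w.2 hv
  have hUspan : W ≤ Submodule.span (MonoidAlgebra R Γ) (U : Set (QA R Γ P)) := by
    rw [← hTspan]
    rw [Submodule.span_le]
    intro v hv
    refine Submodule.span_mono ?_ (hFmem v hv)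
    intro w hw
    rw [hU]
    simp only [Finset.coe_biUnion, Set.mem_iUnion, Finset.mem_coe]
    exact ⟨⟨v, hv⟩, Finset.mem_attach _ _, hw⟩
  -- choose chains representing the elements of U
  have hUch : ∀ v : QA R Γ P, v ∈ U → ∃ y : P → R, y ∈ Bd 𝔠 ∧ y ≠ 0 ∧
      v = theta h (topSlice 𝔠 y) := fun v hv => hUsub hv
  choose ych hy1 hy2 hy3 using hUch
  refine ⟨U.attach.image (fun v : {x // x ∈ U} => ych v.1 v.2), ?_, ?_⟩
  · intro y hy
    simp only [Finset.mem_image] at hy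
    obtain ⟨v, -, rfl⟩ := hy
    exact ⟨hy1 _ _, hy2 _ _⟩
  · intro y hyB hyne
    have h1 : theta h (topSlice 𝔠 y) ∈ W :=
      Submodule.subset_span ⟨y, hyB, hyne, rfl⟩
    refine Submodule.span_mono ?_ (hUspan h1)
    intro v hv
    rw [Set.mem_image]
    refine ⟨ych v hv, ?_, (hy3 v hv).symm⟩
    rw [Finset.coe_image]
    exact Set.mem_image_of_mem _ (by simp : (⟨v, hv⟩ : {x // x ∈ U}) ∈ (U.attach : Set {x // x ∈ U}))


/-! ### Extraction of a homogeneous representation of the top slice -/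

lemma support_finsetSum_finite {ι : Type*} (s : Finset ι) (f : ι → (P → R))
    (hf : ∀ i ∈ s, (Function.support (f i)).Finite) :
    (Function.support (∑ i ∈ s, f i)).Finite := by
  classical
  refine Set.Finite.subset (Set.Finite.biUnion s.finite_toSet hf) ?_
  intro p hp
  rw [Function.mem_support, Finset.sum_apply] at hp
  obtain ⟨i, hi, hne⟩ : ∃ i ∈ s, f i p ≠ 0 := by
    by_contra hcon; push_neg at hcon; exact hp (Finset.sum_eq_zero hcon)
  exact Set.mem_biUnion hi hne

lemma theta_zero (h : ∀ (g : Γ) (p : P), g • p = p → g = 1) :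
    theta h (0 : P → R) = (0 : QA R Γ P) := by
  ext q γ
  rw [theta_apply h (by simp : (Function.support (0 : P → R)).Finite)]
  simp

lemma theta_finsetSum (h : ∀ (g : Γ) (p : P), g • p = p → g = 1) {ι : Type*}
    (s : Finset ι) (f : ι → (P → R)) (hf : ∀ i ∈ s, (Function.support (f i)).Finite) :
    theta h (∑ i ∈ s, f i) = ∑ i ∈ s, theta h (f i) := by
  classical
  induction s using Finset.induction_on with
  | empty => simpa using theta_zero h
  | insert _ _ hnotmem ih =>
    rename_i a s'
    rw [Finset.sum_insert hnotmem, Finset.sum_insert hnotmem,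
      theta_add h (hf a (Finset.mem_insert_self a s'))
        (support_finsetSum_finite s' f fun i hi => hf i (Finset.mem_insert_of_mem hi)),
      ih fun i hi => hf i (Finset.mem_insert_of_mem hi)]

lemma slice_act_of_ne_zero {t : ℝ} {c : P → R} {p : P} (hp : slice 𝔠 t c p ≠ 0) :
    𝔠.act p = t := by
  by_contra hcon
  exact hp (slice_apply_of_ne 𝔠 t c hcon)

/-- Projection of `actA a z` to a single action level, for `z` concentrated in level `s'`. -/
lemma slice_actA_filter (t s' : ℝ) (a : MonoidAlgebra R Γ) {z : P → R}
    (hz : ∀ p, z p ≠ 0 → 𝔠.act p = s') :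
    slice 𝔠 t (actA a z) = actA (MonoidAlgebra.ofCoeff (a.coeff.filter fun g => 𝔠.per g = s' - t)) z := by
  classical
  funext p
  by_cases hpt : 𝔠.act p = t
  · rw [slice_apply_of_act 𝔠 _ _ hpt, actA_apply, actA_apply, MonoidAlgebra.coeff_ofCoeff]
    have key : ∀ g : Γ, z (g⁻¹ • p) ≠ 0 → 𝔠.per g = s' - t := by
      intro g hg
      have := hz _ hg
      rw [act_inv_smul] at this
      rw [hpt] at this
      linarith
    have hL : ∑ g ∈ a.coeff.support, a.coeff g * z (g⁻¹ • p)
        = ∑ g ∈ a.coeff.support, (if 𝔠.per g = s' - t then a.coeff g * z (g⁻¹ • p) else 0) := by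
      refine Finset.sum_congr rfl fun g _ => ?_
      by_cases hgp : 𝔠.per g = s' - t
      · rw [if_pos hgp]
      · rw [if_neg hgp]
        have : z (g⁻¹ • p) = 0 := by
          by_contra hcon; exact hgp (key g hcon)
        rw [this, mul_zero]
    rw [hL]
    have hsub : (a.coeff.filter fun g => 𝔠.per g = s' - t).support ⊆ a.coeff.support := by
      rw [Finsupp.support_filter]; exact Finset.filter_subset _ _
    have h2 : ∑ g ∈ (Finsupp.filter (fun g => 𝔠.per g = s' - t) a.coeff).support,
        (Finsupp.filter (fun g => 𝔠.per g = s' - t) a.coeff) g * z (g⁻¹ • p)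
        = ∑ g ∈ a.coeff.support, (Finsupp.filter (fun g => 𝔠.per g = s' - t) a.coeff) g * z (g⁻¹ • p) :=
      Finset.sum_subset hsub (fun g _ hgn => by
        rw [Finsupp.notMem_support_iff.mp hgn, zero_mul])
    rw [h2]
    refine Finset.sum_congr rfl fun g _ => ?_
    by_cases hgp : 𝔠.per g = s' - t
    · have hfa : (Finsupp.filter (fun g => 𝔠.per g = s' - t) a.coeff) g = a.coeff g :=
        Finsupp.filter_apply_pos _ _ hgp
      rw [hfa, if_pos hgp]
    · have hfa : (Finsupp.filter (fun g => 𝔠.per g = s' - t) a.coeff) g = 0 := by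
        rw [Finsupp.filter_apply, if_neg hgp]
      rw [hfa, if_neg hgp, zero_mul]
  · rw [slice_apply_of_ne 𝔠 _ _ hpt, actA_apply, MonoidAlgebra.coeff_ofCoeff]
    symm
    refine Finset.sum_eq_zero fun g hg => ?_
    rw [Finsupp.support_filter, Finset.mem_filter] at hg
    have : z (g⁻¹ • p) = 0 := by
      by_contra hcon
      have h1 := hz _ hcon
      rw [act_inv_smul] at h1
      exact hpt (by linarith [hg.2])
    rw [this, mul_zero]

lemma topSlice_support_act {c : P → R} {p : P} (hp : topSlice 𝔠 c p ≠ 0) :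
    𝔠.act p = lev 𝔠 c := slice_act_of_ne_zero 𝔠 hp

/-- The key extraction lemma: if the top slice of `x` lies in the span of the
(theta images of) top slices of the standard basis, then it can be written as a
homogeneous combination of shifted top slices of basis elements. -/
lemma extraction {s : Finset (P → R)} (hs : ∀ y ∈ s, y ∈ Bd 𝔠 ∧ y ≠ 0)
    {x : P → R} (hx : IsFloerChain 𝔠.act x)
    (hmem : theta 𝔠.free (topSlice 𝔠 x) ∈ Submodule.span (MonoidAlgebra R Γ)
      ((fun z => theta 𝔠.free (topSlice 𝔠 z)) '' (s : Set (P → R)))) :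
    ∃ (n : ℕ) (b : Fin n → MonoidAlgebra R Γ) (u : Fin n → (P → R)),
      (∀ k, u k ∈ s) ∧
      (∀ k, ∀ g ∈ (b k).coeff.support, 𝔠.per g = lev 𝔠 (u k) - lev 𝔠 x) ∧
      topSlice 𝔠 x = ∑ k, actA (b k) (topSlice 𝔠 (u k)) := by
  classical
  rw [Submodule.mem_span_set'] at hmem
  obtain ⟨n, f, gg, hsum⟩ := hmem
  have hch : ∀ k : Fin n, ∃ u : P → R, u ∈ s ∧
      theta 𝔠.free (topSlice 𝔠 u) = (gg k : QA R Γ P) := by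
    intro k
    obtain ⟨u, hu, hequ⟩ := (gg k).2
    exact ⟨u, hu, hequ⟩
  choose u hus hu using hch
  have huB : ∀ k, u k ∈ Bd 𝔠 ∧ u k ≠ 0 := fun k => hs (u k) (hus k)
  have hufloer : ∀ k, IsFloerChain 𝔠.act (u k) := fun k => Bd_floer 𝔠 (huB k).1
  have hsupfin : ∀ k : Fin n, (Function.support (topSlice 𝔠 (u k))).Finite :=
    fun k => slice_support_finite 𝔠 _ (hufloer k)
  have hxfin : (Function.support (topSlice 𝔠 x)).Finite :=
    slice_support_finite 𝔠 _ hx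
  -- transport the identity back to chains
  have hid : topSlice 𝔠 x = ∑ k : Fin n, actA (f k) (topSlice 𝔠 (u k)) := by
    refine theta_inj 𝔠.free hxfin
      (support_finsetSum_finite _ _ fun k _ => actA_support_finite _ (hsupfin k)) ?_
    rw [theta_finsetSum 𝔠.free _ _ fun k _ => actA_support_finite _ (hsupfin k)]
    rw [← hsum]
    refine Finset.sum_congr rfl fun k _ => ?_
    rw [theta_actA 𝔠.free _ (hsupfin k), hu k]
  -- project to the top level of x
  refine ⟨n, fun k => MonoidAlgebra.ofCoeff ((f k).coeff.filter fun g => 𝔠.per g = lev 𝔠 (u k) - lev 𝔠 x), u,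
    hus, ?_, ?_⟩
  · intro k g hg
    rw [Finsupp.support_filter, Finset.mem_filter] at hg
    exact hg.2
  · have := congrArg (slice 𝔠 (lev 𝔠 x)) hid
    rw [topSlice, slice_slice] at this
    rw [← topSlice] at this
    rw [this, slice_finsetSum]
    refine Finset.sum_congr rfl fun k _ => ?_
    exact slice_actA_filter 𝔠 (lev 𝔠 x) (lev 𝔠 (u k)) (f k)
      (fun p hp => topSlice_support_act 𝔠 hp)


/-! ### The increment sets `D`, `Dstar` and the reachable level set `E` -/

/-- The set of positive level drops within the standard basis `s`. -/
def Dset (s : Finset (P → R)) : Set ℝ :=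
  {d | ∃ y ∈ s, ∃ p, y p ≠ 0 ∧ 𝔠.act p < lev 𝔠 y ∧ d = lev 𝔠 y - 𝔠.act p}

lemma Dset_pos {s : Finset (P → R)} {d : ℝ} (hd : d ∈ Dset 𝔠 s) : 0 < d := by
  obtain ⟨y, -, p, -, hlt, rfl⟩ := hd
  linarith

lemma Dset_fin {s : Finset (P → R)} (hs : ∀ y ∈ s, IsFloerChain 𝔠.act y) (B : ℝ) :
    {d ∈ Dset 𝔠 s | d ≤ B}.Finite := by
  classical
  have : {d ∈ Dset 𝔠 s | d ≤ B} ⊆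
      ⋃ y ∈ s, (fun p => lev 𝔠 y - 𝔠.act p) ''
        {p | y p ≠ 0 ∧ lev 𝔠 y - B - 1 < 𝔠.act p} := by
    rintro d ⟨⟨y, hy, p, hp, hlt, rfl⟩, hle⟩
    exact Set.mem_biUnion hy ⟨p, ⟨hp, by linarith⟩, rfl⟩
  refine Set.Finite.subset ?_ this
  exact Set.Finite.biUnion s.finite_toSet fun y hy => ((hs y hy) _).image _

lemma exists_delta {s : Finset (P → R)} (hs : ∀ y ∈ s, IsFloerChain 𝔠.act y) :
    ∃ δ : ℝ, 0 < δ ∧ ∀ d ∈ Dset 𝔠 s, δ ≤ d := by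
  classical
  have hfin := Dset_fin 𝔠 hs 1
  by_cases hne : hfin.toFinset.Nonempty
  · refine ⟨hfin.toFinset.min' hne, ?_, ?_⟩
    · have h1 : hfin.toFinset.min' hne ∈ hfin.toFinset := Finset.min'_mem _ hne
      rw [Set.Finite.mem_toFinset] at h1
      exact Dset_pos 𝔠 h1.1
    · intro d hd
      by_cases hd1 : d ≤ 1
      · exact Finset.min'_le _ d (by rw [Set.Finite.mem_toFinset]; exact ⟨hd, hd1⟩)
      · have h2 : hfin.toFinset.min' hne ≤ 1 := by
          obtain ⟨e, he⟩ := hne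
          have h3 := Finset.min'_le _ e he
          rw [Set.Finite.mem_toFinset] at he
          linarith [he.2]
        linarith
  · refine ⟨1, one_pos, fun d hd => ?_⟩
    by_contra hcon
    push_neg at hcon
    exact hne ⟨d, by rw [Set.Finite.mem_toFinset]; exact ⟨hd, le_of_lt hcon⟩⟩

/-- Finite sums of elements of `D`. -/
def Dstar (s : Finset (P → R)) : Set ℝ :=
  {x | ∃ m : Multiset ℝ, (∀ d ∈ m, d ∈ Dset 𝔠 s) ∧ m.sum = x}

lemma Dstar_zero (s : Finset (P → R)) : (0 : ℝ) ∈ Dstar 𝔠 s :=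
  ⟨0, by simp, rfl⟩

lemma Dstar_nonneg {s : Finset (P → R)} {x : ℝ} (hx : x ∈ Dstar 𝔠 s) : 0 ≤ x := by
  obtain ⟨m, hm, rfl⟩ := hx
  exact Multiset.sum_nonneg fun d hd => le_of_lt (Dset_pos 𝔠 (hm d hd))

lemma Dstar_add_mem {s : Finset (P → R)} {x d : ℝ} (hx : x ∈ Dstar 𝔠 s)
    (hd : d ∈ Dset 𝔠 s) : x + d ∈ Dstar 𝔠 s := by
  obtain ⟨m, hm, rfl⟩ := hx
  refine ⟨d ::ₘ m, ?_, by rw [Multiset.sum_cons]; ring⟩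
  intro e he
  rw [Multiset.mem_cons] at he
  rcases he with rfl | he
  · exact hd
  · exact hm e he

lemma Dstar_fin_aux {s : Finset (P → R)} (hs : ∀ y ∈ s, IsFloerChain 𝔠.act y)
    {δ : ℝ} (hδ : 0 < δ) (hδD : ∀ d ∈ Dset 𝔠 s, δ ≤ d) :
    ∀ n : ℕ, ∀ B : ℝ, B ≤ n * δ → {x ∈ Dstar 𝔠 s | x ≤ B}.Finite := by
  intro n
  induction n with
  | zero =>
    intro B hB
    refine Set.Finite.subset (Set.finite_singleton 0) ?_
    rintro x ⟨hx, hxB⟩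
    have := Dstar_nonneg 𝔠 hx
    simp only [Nat.cast_zero, zero_mul] at hB
    simp only [Set.mem_singleton_iff]
    linarith
  | succ n ih =>
    intro B hB
    have hsub : {x ∈ Dstar 𝔠 s | x ≤ B} ⊆
        {(0 : ℝ)} ∪ ⋃ d ∈ {d ∈ Dset 𝔠 s | d ≤ B}, (d + ·) '' {x ∈ Dstar 𝔠 s | x ≤ B - d} := by
      rintro x ⟨hx, hxB⟩
      by_cases hx0 : x = 0
      · exact Or.inl hx0
      · obtain ⟨m, hm, rfl⟩ := hx
        have hmne : m ≠ 0 := by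
          rintro rfl; exact hx0 (by simp)
        obtain ⟨d, hd⟩ := Multiset.exists_mem_of_ne_zero hmne
        have hcons : d ::ₘ m.erase d = m := Multiset.cons_erase hd
        have hsum : m.sum = d + (m.erase d).sum := by
          conv_lhs => rw [← hcons]
          rw [Multiset.sum_cons]
        have hrest : (m.erase d).sum ∈ Dstar 𝔠 s :=
          ⟨m.erase d, fun e he => hm e (Multiset.mem_of_mem_erase he), rfl⟩
        have hd0 := Dset_pos 𝔠 (hm d hd)
        have hr0 := Dstar_nonneg 𝔠 hrest
        have hdmem : d ∈ {d | d ∈ Dset 𝔠 s ∧ d ≤ B} :=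
          ⟨hm d hd, by rw [hsum] at hxB; linarith⟩
        have hmem2 : m.sum ∈ (d + ·) '' {x | x ∈ Dstar 𝔠 s ∧ x ≤ B - d} :=
          ⟨(m.erase d).sum, ⟨hrest, by rw [hsum] at hxB; linarith⟩, by simpa using hsum.symm⟩
        exact Or.inr (Set.mem_biUnion hdmem hmem2)
    refine Set.Finite.subset ?_ hsub
    refine (Set.finite_singleton 0).union ?_
    refine Set.Finite.biUnion (Dset_fin 𝔠 hs B) fun d hd => ?_
    refine Set.Finite.image _ (ih (B - d) ?_)
    have hδd := hδD d hd.1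
    push_cast [Nat.cast_succ] at hB ⊢
    nlinarith

lemma Dstar_fin {s : Finset (P → R)} (hs : ∀ y ∈ s, IsFloerChain 𝔠.act y) (B : ℝ) :
    {x ∈ Dstar 𝔠 s | x ≤ B}.Finite := by
  obtain ⟨δ, hδ, hδD⟩ := exists_delta 𝔠 hs
  obtain ⟨n, hn⟩ := exists_nat_ge (B / δ)
  refine Dstar_fin_aux 𝔠 hs hδ hδD n B ?_
  rw [div_le_iff₀ hδ] at hn
  linarith

/-- The set of levels reachable from the levels of `c₀` by finite `D`-drops. -/
def Eset (s : Finset (P → R)) (c₀ : P → R) : Set ℝ :=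
  {e | ∃ p x, c₀ p ≠ 0 ∧ x ∈ Dstar 𝔠 s ∧ e = 𝔠.act p - x}

lemma Eset_base {s : Finset (P → R)} {c₀ : P → R} {p : P} (hp : c₀ p ≠ 0) :
    𝔠.act p ∈ Eset 𝔠 s c₀ := ⟨p, 0, hp, Dstar_zero 𝔠 s, by ring⟩

lemma Eset_drop {s : Finset (P → R)} {c₀ : P → R} {e d : ℝ}
    (he : e ∈ Eset 𝔠 s c₀) (hd : d ∈ Dset 𝔠 s) : e - d ∈ Eset 𝔠 s c₀ := by
  obtain ⟨p, x, hp, hx, rfl⟩ := he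
  exact ⟨p, x + d, hp, Dstar_add_mem 𝔠 hx hd, by ring⟩

lemma Eset_fin {s : Finset (P → R)} (hs : ∀ y ∈ s, IsFloerChain 𝔠.act y)
    {c₀ : P → R} (hc₀ : IsFloerChain 𝔠.act c₀) (hc₀ne : c₀ ≠ 0) (C : ℝ) :
    {e ∈ Eset 𝔠 s c₀ | C ≤ e}.Finite := by
  have hsub : {e ∈ Eset 𝔠 s c₀ | C ≤ e} ⊆
      Set.image2 (fun a b => a - b) (𝔠.act '' {p | c₀ p ≠ 0 ∧ C - 1 < 𝔠.act p})
        {x ∈ Dstar 𝔠 s | x ≤ lev 𝔠 c₀ - C} := by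
    rintro e ⟨⟨p, x, hp, hx, rfl⟩, hC⟩
    have hx0 := Dstar_nonneg 𝔠 hx
    have hlev := le_lev 𝔠 hc₀ hc₀ne hp
    exact ⟨𝔠.act p, ⟨p, ⟨hp, by linarith⟩, rfl⟩, x, ⟨hx, by linarith⟩, rfl⟩
  refine Set.Finite.subset (Set.Finite.image2 _ ((hc₀ (C - 1)).image _) (Dstar_fin 𝔠 hs _)) hsub


/-! ### The descent step -/

lemma actA_exists_of_ne_zero {b : MonoidAlgebra R Γ} {c : P → R} {p : P}
    (hp : actA b c p ≠ 0) : ∃ g ∈ b.coeff.support, c (g⁻¹ • p) ≠ 0 := by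
  rw [actA_apply] at hp
  by_contra hcon
  push_neg at hcon
  exact hp (Finset.sum_eq_zero fun g hg => by rw [hcon g hg, mul_zero])

lemma finsetSum_exists_of_ne_zero {ι : Type*} {s : Finset ι} {f : ι → P → R} {p : P}
    (hp : (∑ i ∈ s, f i) p ≠ 0) : ∃ i ∈ s, f i p ≠ 0 := by
  rw [Finset.sum_apply] at hp
  by_contra hcon
  push_neg at hcon
  exact hp (Finset.sum_eq_zero hcon)

lemma slice_actA_homog (t s' : ℝ) {b : MonoidAlgebra R Γ}
    (hb : ∀ g ∈ b.coeff.support, 𝔠.per g = s' - t) (c : P → R) :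
    slice 𝔠 t (actA b c) = actA b (slice 𝔠 s' c) := by
  funext p
  by_cases hpt : 𝔠.act p = t
  · rw [slice_apply_of_act 𝔠 _ _ hpt, actA_apply, actA_apply]
    refine Finset.sum_congr rfl fun g hg => ?_
    have hper := hb g hg
    have hact : 𝔠.act (g⁻¹ • p) = s' := by rw [act_inv_smul, hpt]; linarith
    rw [slice_apply_of_act 𝔠 _ _ hact]
  · rw [slice_apply_of_ne 𝔠 _ _ hpt, actA_apply]
    symm
    refine Finset.sum_eq_zero fun g hg => ?_
    have hper := hb g hg
    have hz : slice 𝔠 s' c (g⁻¹ • p) = 0 := by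
      apply slice_apply_of_ne
      rw [act_inv_smul]
      intro hcon
      exact hpt (by linarith)
    rw [hz, mul_zero]

lemma step_lemma {c₀ : P → R} (hc₀ : IsFloerChain 𝔠.act c₀)
    (hnonzero : ¬ ∃ h : P → R, IsFloerChain 𝔠.act h ∧ floerBdry 𝔠.bnd h = c₀)
    {s : Finset (P → R)} (hsB : ∀ y ∈ s, y ∈ Bd 𝔠 ∧ y ≠ 0)
    (w : (P → R) → (P → R)) (hw1 : ∀ y ∈ s, IsFloerChain 𝔠.act (w y))
    (hw2 : ∀ y ∈ s, floerBdry 𝔠.bnd (w y) = y)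
    {K : ℝ} (hK : ∀ y ∈ s, lev 𝔠 (w y) - lev 𝔠 y ≤ K)
    {h : P → R} (hh : IsFloerChain 𝔠.act h)
    (hxne : c₀ - floerBdry 𝔠.bnd h ≠ 0)
    (hxE : ∀ p, (c₀ - floerBdry 𝔠.bnd h) p ≠ 0 → 𝔠.act p ∈ Eset 𝔠 s c₀)
    (hmem : theta 𝔠.free (topSlice 𝔠 (c₀ - floerBdry 𝔠.bnd h)) ∈
      Submodule.span (MonoidAlgebra R Γ)
        ((fun z => theta 𝔠.free (topSlice 𝔠 z)) '' (s : Set (P → R)))) :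
    ∃ h' : P → R, IsFloerChain 𝔠.act h' ∧
      (c₀ - floerBdry 𝔠.bnd h' ≠ 0) ∧
      (∀ p, (c₀ - floerBdry 𝔠.bnd h') p ≠ 0 → 𝔠.act p ∈ Eset 𝔠 s c₀) ∧
      lev 𝔠 (c₀ - floerBdry 𝔠.bnd h') < lev 𝔠 (c₀ - floerBdry 𝔠.bnd h) ∧
      (∀ p, (h' - h) p ≠ 0 → 𝔠.act p ≤ K + lev 𝔠 (c₀ - floerBdry 𝔠.bnd h)) := by
  classical
  set x : P → R := c₀ - floerBdry 𝔠.bnd h with hxdef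
  have hx : IsFloerChain 𝔠.act x := floer_sub 𝔠 hc₀ (𝔠.bdry_isChain h hh)
  set t : ℝ := lev 𝔠 x with htdef
  obtain ⟨n, b, u, hus, hbsup, hident⟩ := extraction 𝔠 hsB hx hmem
  have huB : ∀ k, u k ∈ Bd 𝔠 := fun k => (hsB _ (hus k)).1
  have hune : ∀ k, u k ≠ 0 := fun k => (hsB _ (hus k)).2
  have hufl : ∀ k, IsFloerChain 𝔠.act (u k) := fun k => Bd_floer 𝔠 (huB k)
  set φ : P → R := ∑ k : Fin n, actA (b k) (w (u k)) with hφdef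
  have hφfl : IsFloerChain 𝔠.act φ :=
    floer_finsetSum 𝔠 _ _ fun k _ => floer_actA 𝔠 _ (hw1 _ (hus k))
  set z : P → R := ∑ k : Fin n, actA (b k) (u k) with hzdef
  have hbφ : floerBdry 𝔠.bnd φ = z := by
    rw [hφdef, floerBdry_finsetSum 𝔠 _ _ fun k _ => floer_actA 𝔠 _ (hw1 _ (hus k))]
    refine Finset.sum_congr rfl fun k _ => ?_
    rw [floerBdry_actA 𝔠 _ (hw1 _ (hus k)), hw2 _ (hus k)]
  have hh' : IsFloerChain 𝔠.act (h + φ) := floer_add 𝔠 hh hφfl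
  have hx' : c₀ - floerBdry 𝔠.bnd (h + φ) = x - z := by
    rw [floerBdry_add 𝔠 hh hφfl, hbφ, hxdef]
    funext p
    simp only [Pi.sub_apply, Pi.add_apply]
    ring
  -- the top slice of `z` equals the top slice of `x`
  have hslz : slice 𝔠 t z = topSlice 𝔠 x := by
    rw [hzdef, slice_finsetSum, hident]
    refine Finset.sum_congr rfl fun k _ => ?_
    exact slice_actA_homog 𝔠 t (lev 𝔠 (u k)) (hbsup k) (u k)
  have hz_top : ∀ p, 𝔠.act p = t → z p = x p := by
    intro p hp
    have h1 := congrFun hslz p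
    rw [slice_apply_of_act 𝔠 _ _ hp] at h1
    rw [h1, topSlice, slice_apply_of_act 𝔠 _ _ hp]
  -- support structure of x - z
  have hkey : ∀ p, (x - z) p ≠ 0 → 𝔠.act p < t ∧ 𝔠.act p ∈ Eset 𝔠 s c₀ := by
    intro p hp
    have hpt : 𝔠.act p ≠ t := by
      intro hpt
      apply hp
      show x p - z p = 0
      rw [hz_top p hpt, sub_self]
    by_cases hxp : x p = 0
    · have hzp : z p ≠ 0 := by
        intro h0
        apply hp
        show x p - z p = 0
        rw [hxp, h0, sub_self]
      obtain ⟨k, -, hk⟩ := finsetSum_exists_of_ne_zero hzp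
      obtain ⟨g, hg, hcg⟩ := actA_exists_of_ne_zero hk
      have hper := hbsup k g hg
      have hact : 𝔠.act (g⁻¹ • p) = 𝔠.act p + 𝔠.per g := act_inv_smul 𝔠 g p
      have hle : 𝔠.act (g⁻¹ • p) ≤ lev 𝔠 (u k) := le_lev 𝔠 (hufl k) (hune k) hcg
      have hlt : 𝔠.act p < t := lt_of_le_of_ne (by linarith) hpt
      have hstrict : 𝔠.act (g⁻¹ • p) < lev 𝔠 (u k) := by
        rcases lt_or_eq_of_le hle with h1 | h1
        · exact h1
        · exact absurd (by linarith : 𝔠.act p = t) hpt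
      have hd : lev 𝔠 (u k) - 𝔠.act (g⁻¹ • p) ∈ Dset 𝔠 s :=
        ⟨u k, hus k, g⁻¹ • p, hcg, hstrict, rfl⟩
      obtain ⟨pt', hpt1, hpt2⟩ := lev_mem 𝔠 hx hxne
      have htE : t ∈ Eset 𝔠 s c₀ := by rw [htdef, ← hpt2]; exact hxE pt' hpt1
      have heq : 𝔠.act p = t - (lev 𝔠 (u k) - 𝔠.act (g⁻¹ • p)) := by linarith
      exact ⟨hlt, heq ▸ Eset_drop 𝔠 htE hd⟩
    · have hle := le_lev 𝔠 hx hxne hxp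
      exact ⟨lt_of_le_of_ne hle hpt, hxE p hxp⟩
  have hx'ne : c₀ - floerBdry 𝔠.bnd (h + φ) ≠ 0 := by
    intro h0
    refine hnonzero ⟨h + φ, hh', ?_⟩
    have := sub_eq_zero.mp h0
    exact this.symm
  have hx'fl : IsFloerChain 𝔠.act (c₀ - floerBdry 𝔠.bnd (h + φ)) :=
    floer_sub 𝔠 hc₀ (𝔠.bdry_isChain _ hh')
  refine ⟨h + φ, hh', hx'ne, ?_, ?_, ?_⟩
  · intro p hp
    rw [hx'] at hp
    exact (hkey p hp).2
  · obtain ⟨p', hp'1, hp'2⟩ := lev_mem 𝔠 hx'fl hx'ne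
    rw [← hp'2]
    rw [hx'] at hp'1
    exact (hkey p' hp'1).1
  · intro p hp
    have hφp : φ p ≠ 0 := by
      have : (h + φ - h) p = φ p := by simp
      rwa [this] at hp
    obtain ⟨k, -, hk⟩ := finsetSum_exists_of_ne_zero hφp
    obtain ⟨g, hg, hcg⟩ := actA_exists_of_ne_zero hk
    have hper := hbsup k g hg
    have hact : 𝔠.act (g⁻¹ • p) = 𝔠.act p + 𝔠.per g := act_inv_smul 𝔠 g p
    have hwne : w (u k) ≠ 0 := by
      intro h0
      apply hune k
      rw [← hw2 _ (hus k), h0]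
      exact floerBdry_zero 𝔠
    have hle : 𝔠.act (g⁻¹ • p) ≤ lev 𝔠 (w (u k)) :=
      le_lev 𝔠 (hw1 _ (hus k)) hwne hcg
    have hKk := hK _ (hus k)
    linarith


/-! ### The descent terminates: existence of a stopping state -/

lemma exists_stop {c₀ : P → R} (hc₀ : IsFloerChain 𝔠.act c₀)
    (hnonzero : ¬ ∃ h : P → R, IsFloerChain 𝔠.act h ∧ floerBdry 𝔠.bnd h = c₀)
    {s : Finset (P → R)} (hsB : ∀ y ∈ s, y ∈ Bd 𝔠 ∧ y ≠ 0)
    (w : (P → R) → (P → R)) (hw1 : ∀ y ∈ s, IsFloerChain 𝔠.act (w y))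
    (hw2 : ∀ y ∈ s, floerBdry 𝔠.bnd (w y) = y)
    {K : ℝ} (hK : ∀ y ∈ s, lev 𝔠 (w y) - lev 𝔠 y ≤ K) :
    ∃ h : P → R, IsFloerChain 𝔠.act h ∧ (c₀ - floerBdry 𝔠.bnd h ≠ 0) ∧
      theta 𝔠.free (topSlice 𝔠 (c₀ - floerBdry 𝔠.bnd h)) ∉
        Submodule.span (MonoidAlgebra R Γ)
          ((fun z => theta 𝔠.free (topSlice 𝔠 z)) '' (s : Set (P → R))) := by
  by_contra hcon
  push_neg at hcon
  have hc₀ne : c₀ ≠ 0 := by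
    rintro rfl
    exact hnonzero ⟨0, IsFloerChain.zero' 𝔠, floerBdry_zero 𝔠⟩
  have hsfl : ∀ y ∈ s, IsFloerChain 𝔠.act y := fun y hy => Bd_floer 𝔠 (hsB y hy).1
  let St := {h : P → R // IsFloerChain 𝔠.act h ∧ (c₀ - floerBdry 𝔠.bnd h ≠ 0) ∧
    ∀ p, (c₀ - floerBdry 𝔠.bnd h) p ≠ 0 → 𝔠.act p ∈ Eset 𝔠 s c₀}
  have hstep : ∀ st : St, ∃ st' : St,
      lev 𝔠 (c₀ - floerBdry 𝔠.bnd st'.1) < lev 𝔠 (c₀ - floerBdry 𝔠.bnd st.1) ∧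
      ∀ p, (st'.1 - st.1) p ≠ 0 → 𝔠.act p ≤ K + lev 𝔠 (c₀ - floerBdry 𝔠.bnd st.1) := by
    rintro ⟨h, hh, hne, hE⟩
    obtain ⟨h', h1, h2, h3, h4, h5⟩ := step_lemma 𝔠 hc₀ hnonzero hsB w hw1 hw2 hK hh hne hE
      (hcon h hh hne)
    exact ⟨⟨h', h1, h2, h3⟩, h4, h5⟩
  choose next hlt hinc using hstep
  have hE0 : ∀ p, (c₀ - floerBdry 𝔠.bnd (0 : P → R)) p ≠ 0 → 𝔠.act p ∈ Eset 𝔠 s c₀ := by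
    intro p hp
    rw [floerBdry_zero] at hp
    refine Eset_base 𝔠 ?_
    simpa using hp
  have hne0 : c₀ - floerBdry 𝔠.bnd (0 : P → R) ≠ 0 := by
    rw [floerBdry_zero]
    simpa using hc₀ne
  let st₀ : St := ⟨0, IsFloerChain.zero' 𝔠, hne0, hE0⟩
  let seq : ℕ → St := fun j => Nat.recAux st₀ (fun _ st => next st) j
  have hseq : ∀ j, seq (j + 1) = next (seq j) := fun j => rfl
  let tlev : ℕ → ℝ := fun j => lev 𝔠 (c₀ - floerBdry 𝔠.bnd (seq j).1)
  have htdec : ∀ j, tlev (j + 1) < tlev j := fun j => by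
    show lev 𝔠 (c₀ - floerBdry 𝔠.bnd (seq (j+1)).1) < _
    rw [hseq]
    exact hlt (seq j)
  have htanti : StrictAnti tlev := strictAnti_nat_of_succ_lt htdec
  have hunb : ∀ C : ℝ, ∃ j, tlev j < C := by
    intro C
    by_contra hbd
    push_neg at hbd
    have hmem : ∀ j, tlev j ∈ {e | e ∈ Eset 𝔠 s c₀ ∧ C ≤ e} := by
      intro j
      obtain ⟨p, hp1, hp2⟩ := lev_mem 𝔠
        (floer_sub 𝔠 hc₀ (𝔠.bdry_isChain _ (seq j).2.1)) (seq j).2.2.1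
      refine ⟨?_, hbd j⟩
      rw [show tlev j = lev 𝔠 (c₀ - floerBdry 𝔠.bnd (seq j).1) from rfl, ← hp2]
      exact (seq j).2.2.2 p hp1
    exact (Eset_fin 𝔠 hsfl hc₀ hc₀ne C).not_infinite
      (Set.infinite_of_injective_forall_mem htanti.injective hmem)
  have hstab : ∀ (p : P) (i j : ℕ), i ≤ j → K + tlev i < 𝔠.act p →
      (seq j).1 p = (seq i).1 p := by
    intro p i j hij hKi
    induction j with
    | zero =>
      have : i = 0 := Nat.le_zero.mp hij
      rw [this]
    | succ n ih =>
      rcases Nat.lt_or_ge i (n + 1) with h1 | h2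
      · have hin : i ≤ n := Nat.lt_succ_iff.mp h1
        have hstep' : (seq (n + 1)).1 p = (seq n).1 p := by
          by_contra hne'
          have hd : ((next (seq n)).1 - (seq n).1) p ≠ 0 := by
            rw [← hseq]
            intro h0
            rw [Pi.sub_apply, sub_eq_zero] at h0
            exact hne' h0
          have h5 := hinc (seq n) p hd
          have h6 := htanti.antitone hin
          change lev 𝔠 (c₀ - floerBdry 𝔠.bnd (seq n).1) ≤ tlev i at h6
          linarith
        rw [hstep', ih hin]
      · have : i = n + 1 := le_antisymm hij h2
        rw [this]
  have hJex : ∀ p : P, ∃ j, K + tlev j < 𝔠.act p := by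
    intro p
    obtain ⟨j, hj⟩ := hunb (𝔠.act p - K)
    exact ⟨j, by linarith⟩
  choose J hJ using hJex
  let hinf : P → R := fun p => (seq (J p)).1 p
  have hagree : ∀ (p : P) (j : ℕ), K + tlev j < 𝔠.act p → hinf p = (seq j).1 p := by
    intro p j hj
    rcases le_total j (J p) with h1 | h1
    · exact hstab p j (J p) h1 hj
    · exact (hstab p (J p) j h1 (hJ p)).symm
  have hfl : IsFloerChain 𝔠.act hinf := by
    intro C
    obtain ⟨j₀, hj₀⟩ := hunb (C - K)
    refine (((seq j₀).2.1) C).subset ?_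
    rintro p ⟨hp1, hp2⟩
    have heq : hinf p = (seq j₀).1 p := hagree p j₀ (by linarith)
    exact ⟨by rwa [← heq], hp2⟩
  have hbdy : floerBdry 𝔠.bnd hinf = c₀ := by
    funext q
    obtain ⟨j, hj⟩ := hunb (min (𝔠.act q - K) (𝔠.act q))
    have hj1 : K + tlev j < 𝔠.act q := by
      have := min_le_left (𝔠.act q - K) (𝔠.act q)
      linarith
    have hj2 : tlev j < 𝔠.act q := lt_of_lt_of_le hj (min_le_right _ _)
    have hsummand : ∀ p, hinf p * 𝔠.bnd p q = (seq j).1 p * 𝔠.bnd p q := by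
      intro p
      by_cases hb : 𝔠.bnd p q = 0
      · rw [hb, mul_zero, mul_zero]
      · have hlt' := 𝔠.bnd_vanish p q hb
        rw [hagree p j (by linarith)]
    have h1 : floerBdry 𝔠.bnd hinf q = floerBdry 𝔠.bnd (seq j).1 q := finsum_congr hsummand
    have h2 : (c₀ - floerBdry 𝔠.bnd (seq j).1) q = 0 :=
      apply_eq_zero_of_lev_lt 𝔠 (floer_sub 𝔠 hc₀ (𝔠.bdry_isChain _ (seq j).2.1))
        (seq j).2.2.1 hj2
    rw [Pi.sub_apply, sub_eq_zero] at h2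
    rw [h1, ← h2]
  exact hnonzero ⟨hinf, hfl, hbdy⟩


lemma theta_neg (h : ∀ (g : Γ) (p : P), g • p = p → g = 1) {c : P → R}
    (hc : (Function.support c).Finite) : theta h (-c) = - theta h c := by
  have hnc : (Function.support (-c)).Finite := by
    have hsupp : Function.support (-c) = Function.support c := by
      ext p; simp
    rwa [hsupp]
  ext q γ
  rw [theta_apply h hnc]
  have : ((- theta h c) q).coeff γ = - ((theta h c q).coeff γ) := by
    rw [Finsupp.neg_apply, MonoidAlgebra.coeff_neg, Finsupp.neg_apply]
  rw [this, theta_apply h hc]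
  simp

end FloerProof

open FloerProof in
/-- spectrality: over a Noetherian ring, the spectral number of
any nonzero homology class lies in the image of the action functional,
`ρ(a) ∈ 𝒜(P)`. -/
theorem spectrality [Group.FG Γ] [IsNoetherianRing R]
    (𝔠 : FloerComplex R Γ P) (c₀ : P → R)
    (hchain : IsFloerChain 𝔠.act c₀) (hcycle : floerBdry 𝔠.bnd c₀ = 0)
    (hnonzero : ¬ ∃ h : P → R, IsFloerChain 𝔠.act h ∧ floerBdry 𝔠.bnd h = c₀) :
    ∃ p : P, ((𝔠.act p : ℝ) : EReal) = sInf (repLevels 𝔠 c₀) := by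
  classical
  obtain ⟨s, hsB, hspan⟩ := exists_sbasis 𝔠 𝔠.free
  have hwex : ∀ y ∈ s, ∃ hy : P → R, IsFloerChain 𝔠.act hy ∧ floerBdry 𝔠.bnd hy = y :=
    fun y hy => (hsB y hy).1
  choose! w hw1 hw2 using hwex
  have hK : ∀ y ∈ s, lev 𝔠 (w y) - lev 𝔠 y ≤ ∑ y ∈ s, |lev 𝔠 (w y) - lev 𝔠 y| := by
    intro y hy
    refine le_trans (le_abs_self _) ?_
    exact Finset.single_le_sum (f := fun y => |lev 𝔠 (w y) - lev 𝔠 y|)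
      (fun i _ => abs_nonneg _) hy
  obtain ⟨hst, hh, hxne, hnotin⟩ := exists_stop 𝔠 hchain hnonzero hsB w hw1 hw2 hK
  set x : P → R := c₀ - floerBdry 𝔠.bnd hst with hx
  have hxfl : IsFloerChain 𝔠.act x := floer_sub 𝔠 hchain (𝔠.bdry_isChain _ hh)
  obtain ⟨pstar, hp1, hp2⟩ := lev_mem 𝔠 hxfl hxne
  refine ⟨pstar, ?_⟩
  rw [hp2]
  apply le_antisymm
  · apply le_sInf
    rintro v ⟨c, hc, hccyc, ⟨hc2, hc21, hc22⟩, rfl⟩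
    have hcne : c ≠ 0 := by
      rintro rfl
      refine hnonzero ⟨-hc2, floer_neg 𝔠 hc21, ?_⟩
      rw [floerBdry_neg, hc22]
      funext p; simp
    rw [floerLevel_eq_lev 𝔠 hc hcne, EReal.coe_le_coe_iff]
    by_contra hltc
    push_neg at hltc
    have hyB : c - x ∈ Bd 𝔠 := by
      refine ⟨hc2 + hst, floer_add 𝔠 hc21 hh, ?_⟩
      rw [floerBdry_add 𝔠 hc21 hh, hc22]
      funext p
      simp only [Pi.add_apply, Pi.sub_apply, hx]
      ring
    have hcp : c pstar = 0 := by
      refine apply_eq_zero_of_lev_lt 𝔠 hc hcne ?_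
      rw [hp2]; exact hltc
    have hmm : (c - x) pstar ≠ 0 := by
      rw [Pi.sub_apply, hcp, zero_sub, neg_ne_zero]
      exact hp1
    have hyne : c - x ≠ 0 := by
      intro h0
      rw [h0] at hmm
      exact hmm rfl
    have hub : ∀ p, (c - x) p ≠ 0 → 𝔠.act p ≤ lev 𝔠 x := by
      intro p hp
      by_cases hcp' : c p = 0
      · have hxp : x p ≠ 0 := by
          intro h0
          exact hp (by rw [Pi.sub_apply, hcp', h0, sub_self])
        exact le_lev 𝔠 hxfl hxne hxp
      · have := le_lev 𝔠 hc hcne hcp'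
        linarith
    have hyfl : IsFloerChain 𝔠.act (c - x) := floer_sub 𝔠 hc hxfl
    have hlevy : lev 𝔠 (c - x) = lev 𝔠 x :=
      lev_eq_of 𝔠 hyfl hyne ⟨pstar, hmm, hp2⟩ hub
    have htop : topSlice 𝔠 (c - x) = - topSlice 𝔠 x := by
      rw [topSlice, hlevy, slice_sub, slice_eq_zero_of_gt 𝔠 hc hcne hltc, zero_sub, topSlice]
    apply hnotin
    have hmem := hspan (c - x) hyB hyne
    rw [htop, theta_neg 𝔠.free (c := topSlice 𝔠 x)
      (slice_support_finite 𝔠 (lev 𝔠 x) hxfl)] at hmem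
    exact (Submodule.neg_mem_iff _).mp hmem
  · apply sInf_le
    refine ⟨x, hxfl, ?_, ⟨-hst, floer_neg 𝔠 hh, ?_⟩, (floerLevel_eq_lev 𝔠 hxfl hxne).symm⟩
    · rw [hx, floerBdry_sub 𝔠 hchain (𝔠.bdry_isChain _ hh), hcycle, 𝔠.bdry_bdry hst hh,
        sub_zero]
    · rw [floerBdry_neg]
      funext p
      simp only [Pi.neg_apply, Pi.sub_apply, hx]
      ring
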